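/- The unique solution x* in (0,1] of the equation tan(√2 x) = 2√2 / x exists and satisfies 0.892 ≤ x* ≤ 0.899. -/

import Mathlib

open Real

/-- Base Taylor bounds for sin and cos on [0,1]. -/
lemma taylor_base {s slo shi clo chi : ℝ} (h0 : 0 ≤ s) (h1 : s ≤ 1)
    (hslo : slo ≤ s - s ^ 3 / 6 - s ^ 4 * (5 / 96))
    (hshi : s - s ^ 3 / 6 + s ^ 4 * (5 / 96) ≤ shi)
    (hclo : clo ≤ 1 - s ^ 2 / 2 - s ^ 4 * (5 / 96))
    (hchi : 1 - s ^ 2 / 2 + s ^ 4 * (5 / 96) ≤ chi) :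
    slo ≤ Real.sin s ∧ Real.sin s ≤ shi ∧ clo ≤ Real.cos s ∧ Real.cos s ≤ chi := by
  have habs : |s| ≤ 1 := by rw [abs_of_nonneg h0]; exact h1
  have hs := Real.sin_bound habs
  have hc := Real.cos_bound habs
  rw [abs_of_nonneg h0] at hs hc
  rw [abs_le] at hs hc
  refine ⟨by linarith [hs.1, mul_le_of_le_one_right (pow_nonneg h0 4) h1, pow_nonneg h0 4], by linarith [hs.2, mul_le_of_le_one_right (pow_nonneg h0 4) h1, pow_nonneg h0 4], by linarith [hc.1], by linarith [hc.2]⟩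

/-- Doubling step for sin/cos bounds. -/
lemma taylor_dbl {s slo shi clo chi s2lo s2hi c2lo c2hi : ℝ}
    (hs1 : slo ≤ Real.sin s) (hs2 : Real.sin s ≤ shi)
    (hc1 : clo ≤ Real.cos s) (hc2 : Real.cos s ≤ chi)
    (h0s : 0 ≤ slo) (h0c : 0 ≤ clo)
    (h1 : s2lo ≤ 2 * slo * clo) (h2 : 2 * shi * chi ≤ s2hi)
    (h3 : c2lo ≤ 1 - 2 * shi ^ 2) (h4 : 1 - 2 * slo ^ 2 ≤ c2hi) :
    s2lo ≤ Real.sin (2 * s) ∧ Real.sin (2 * s) ≤ s2hi ∧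
      c2lo ≤ Real.cos (2 * s) ∧ Real.cos (2 * s) ≤ c2hi := by
  have hsin2 : Real.sin (2 * s) = 2 * Real.sin s * Real.cos s := Real.sin_two_mul s
  have hcos2 : Real.cos (2 * s) = 1 - 2 * Real.sin s ^ 2 := by
    have := Real.cos_two_mul s
    have hpyth := Real.sin_sq_add_cos_sq s
    nlinarith [this, hpyth]
  refine ⟨?_, ?_, ?_, ?_⟩
  · rw [hsin2]; nlinarith
  · rw [hsin2]; nlinarith
  · rw [hcos2]; nlinarith
  · rw [hcos2]; nlinarith

lemma sincos_12615 :
    Real.sin 1.2615 ≤ 0.9549482 ∧ 0.3020385 ≤ Real.cos 1.2615 := by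
  have b := taylor_base (s := 0.315375) (slo := 0.3096318) (shi := 0.3106623)
    (clo := 0.949754) (chi := 0.9507846) (by norm_num) (by norm_num)
    (by norm_num) (by norm_num) (by norm_num) (by norm_num)
  have d1 := taylor_dbl (s2lo := 0.588148) (s2hi := 0.5907459)
    (c2lo := 0.8069778) (c2hi := 0.8082563)
    b.1 b.2.1 b.2.2.1 b.2.2.2 (by norm_num) (by norm_num)
    (by norm_num) (by norm_num) (by norm_num) (by norm_num)
  have e1 : (2 : ℝ) * 0.315375 = 0.63075 := by norm_num
  rw [e1] at d1
  have d2 := taylor_dbl (s2lo := 0.9492447) (s2hi := 0.9549482)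
    (c2lo := 0.3020385) (c2hi := 0.3081639)
    d1.1 d1.2.1 d1.2.2.1 d1.2.2.2 (by norm_num) (by norm_num)
    (by norm_num) (by norm_num) (by norm_num) (by norm_num)
  have e2 : (2 : ℝ) * 0.63075 = 1.2615 := by norm_num
  rw [e2] at d2
  exact ⟨d2.2.1, d2.2.2.1⟩

lemma sincos_12713 :
    0.952071 ≤ Real.sin 1.2713 ∧ Real.cos 1.2713 ≤ 0.2989686 := by
  have b := taylor_base (s := 0.317825) (slo := 0.3119428) (shi := 0.3130058)
    (clo := 0.9489621) (chi := 0.9500251) (by norm_num) (by norm_num)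
    (by norm_num) (by norm_num) (by norm_num) (by norm_num)
  have d1 := taylor_dbl (s2lo := 0.5920437) (s2hi := 0.5947268)
    (c2lo := 0.8040547) (c2hi := 0.8053834)
    b.1 b.2.1 b.2.2.1 b.2.2.2 (by norm_num) (by norm_num)
    (by norm_num) (by norm_num) (by norm_num) (by norm_num)
  have e1 : (2 : ℝ) * 0.317825 = 0.63565 := by norm_num
  rw [e1] at d1
  have d2 := taylor_dbl (s2lo := 0.952071) (s2hi := 0.9579662)
    (c2lo := 0.2926) (c2hi := 0.2989686)
    d1.1 d1.2.1 d1.2.2.1 d1.2.2.2 (by norm_num) (by norm_num)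
    (by norm_num) (by norm_num) (by norm_num) (by norm_num)
  have e2 : (2 : ℝ) * 0.63565 = 1.2713 := by norm_num
  rw [e2] at d2
  exact ⟨d2.1, d2.2.2.2⟩

/-- g(t) = t sin t - 4 cos t is strictly monotone on [0, π/2]. -/
lemma g_strictMono :
    StrictMonoOn (fun t : ℝ => t * Real.sin t - 4 * Real.cos t) (Set.Icc 0 (Real.pi / 2)) := by
  have hd : ∀ t : ℝ, HasDerivAt (fun t : ℝ => t * Real.sin t - 4 * Real.cos t)
      (Real.sin t + t * Real.cos t + 4 * Real.sin t) t := by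
    intro t
    have h1 := (hasDerivAt_id t).mul (Real.hasDerivAt_sin t)
    have h2 := (Real.hasDerivAt_cos t).const_mul (4 : ℝ)
    have := h1.sub h2
    convert this using 1
    · rfl
    · rfl
    · rfl
    simp [id]
  apply strictMonoOn_of_deriv_pos (convex_Icc _ _)
  · exact ((continuous_id.mul Real.continuous_sin).sub
      (continuous_const.mul Real.continuous_cos)).continuousOn
  · intro t ht
    rw [interior_Icc] at ht
    rw [(hd t).deriv]
    have hπ := Real.pi_pos
    have hsin : 0 < Real.sin t :=
      Real.sin_pos_of_pos_of_lt_pi ht.1 (by linarith [ht.2])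
    have hcos : 0 < Real.cos t :=
      Real.cos_pos_of_mem_Ioo ⟨by linarith [ht.1], ht.2⟩
    nlinarith [ht.1]

lemma sqrt2_lt : Real.sqrt 2 < 1.414214 := by
  have h := Real.sq_sqrt (by norm_num : (2:ℝ) ≥ 0)
  nlinarith [Real.sqrt_nonneg 2]

lemma sqrt2_gt : 1.414213 < Real.sqrt 2 := by
  have h := Real.sq_sqrt (by norm_num : (2:ℝ) ≥ 0)
  nlinarith [Real.sqrt_nonneg 2]

theorem stmt_15 :
    ∃ x : ℝ, (x ∈ Set.Ioc (0 : ℝ) 1 ∧ Real.tan (Real.sqrt 2 * x) = 2 * Real.sqrt 2 / x) ∧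
      (∀ y : ℝ, y ∈ Set.Ioc (0 : ℝ) 1 →
        Real.tan (Real.sqrt 2 * y) = 2 * Real.sqrt 2 / y → y = x) ∧
      0.892 ≤ x ∧ x ≤ 0.899 := by
  set g : ℝ → ℝ := fun t => t * Real.sin t - 4 * Real.cos t with hg
  have hπ := Real.pi_gt_d6
  have hs2lt := sqrt2_lt
  have hs2gt := sqrt2_gt
  have hs2pos : (0:ℝ) < Real.sqrt 2 := by linarith
  -- membership facts
  have hmem : ∀ y : ℝ, y ∈ Set.Ioc (0:ℝ) 1 → Real.sqrt 2 * y ∈ Set.Icc (0:ℝ) (Real.pi / 2) := by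
    intro y hy
    constructor
    · exact mul_nonneg hs2pos.le hy.1.le
    · nlinarith [hy.1, hy.2]
  -- the equation tan(√2 y) = 2√2/y is equivalent to g(√2 y) = 0 on (0,1]
  have hequiv : ∀ y : ℝ, y ∈ Set.Ioc (0:ℝ) 1 →
      (Real.tan (Real.sqrt 2 * y) = 2 * Real.sqrt 2 / y ↔ g (Real.sqrt 2 * y) = 0) := by
    intro y hy
    have hcos : 0 < Real.cos (Real.sqrt 2 * y) := by
      apply Real.cos_pos_of_mem_Ioo
      constructor
      · nlinarith [hy.1, hy.2]
      · nlinarith [hy.1, hy.2]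
    have h2 : Real.sqrt 2 ^ 2 = 2 := Real.sq_sqrt (by norm_num)
    rw [Real.tan_eq_sin_div_cos, div_eq_div_iff hcos.ne' hy.1.ne']
    simp only [hg]
    constructor
    · intro h
      linear_combination Real.sqrt 2 * h + 2 * Real.cos (Real.sqrt 2 * y) * h2
    · intro h
      linear_combination (Real.sqrt 2 / 2) * h - (y * Real.sin (Real.sqrt 2 * y) / 2) * h2
  -- g is negative at √2 * 0.892 and positive at √2 * 0.899
  have hb1 : Real.sqrt 2 * 0.892 ≤ 1.2615 := by nlinarith
  have hb2 : (1.2713 : ℝ) ≤ Real.sqrt 2 * 0.899 := by nlinarith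
  have hgmono := g_strictMono
  have hm1 : Real.sqrt 2 * 0.892 ∈ Set.Icc (0:ℝ) (Real.pi / 2) :=
    ⟨by positivity, by nlinarith⟩
  have hm1' : (1.2615 : ℝ) ∈ Set.Icc (0:ℝ) (Real.pi / 2) := ⟨by norm_num, by nlinarith⟩
  have hm2 : Real.sqrt 2 * 0.899 ∈ Set.Icc (0:ℝ) (Real.pi / 2) :=
    ⟨by positivity, by nlinarith⟩
  have hm2' : (1.2713 : ℝ) ∈ Set.Icc (0:ℝ) (Real.pi / 2) := ⟨by norm_num, by nlinarith⟩
  have hg1 : g (Real.sqrt 2 * 0.892) < 0 := by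
    have h1 : g (Real.sqrt 2 * 0.892) ≤ g 1.2615 :=
      hgmono.monotoneOn hm1 hm1' hb1
    have h2 : g 1.2615 < 0 := by
      have := sincos_12615
      simp only [hg]
      nlinarith [this.1, this.2]
    linarith
  have hg2 : 0 < g (Real.sqrt 2 * 0.899) := by
    have h1 : g 1.2713 ≤ g (Real.sqrt 2 * 0.899) :=
      hgmono.monotoneOn hm2' hm2 hb2
    have h2 : 0 < g 1.2713 := by
      have := sincos_12713
      simp only [hg]
      nlinarith [this.1, this.2]
    linarith
  -- IVT
  have hF : ContinuousOn (fun x : ℝ => g (Real.sqrt 2 * x)) (Set.Icc 0.892 0.899) := by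
    apply Continuous.continuousOn
    have : Continuous g := (continuous_id.mul Real.continuous_sin).sub
      (continuous_const.mul Real.continuous_cos)
    exact this.comp (continuous_const.mul continuous_id)
  have hivt := intermediate_value_Icc (by norm_num : (0.892:ℝ) ≤ 0.899) hF
  have h0mem : (0:ℝ) ∈ Set.Icc (g (Real.sqrt 2 * 0.892)) (g (Real.sqrt 2 * 0.899)) :=
    ⟨le_of_lt hg1, le_of_lt hg2⟩
  obtain ⟨x, hx, hfx⟩ := hivt h0mem
  have hxIoc : x ∈ Set.Ioc (0:ℝ) 1 := ⟨by linarith [hx.1], by linarith [hx.2]⟩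
  refine ⟨x, ⟨hxIoc, (hequiv x hxIoc).2 hfx⟩, ?_, hx.1, hx.2⟩
  intro y hy hty
  have hgy : g (Real.sqrt 2 * y) = 0 := (hequiv y hy).1 hty
  have hfx' : g (Real.sqrt 2 * x) = 0 := hfx
  simp only [hg] at hgy hfx'
  have := hgmono.injOn (hmem y hy) (hmem x hxIoc) (by show Real.sqrt 2 * y * Real.sin (Real.sqrt 2 * y) - 4 * Real.cos (Real.sqrt 2 * y) = Real.sqrt 2 * x * Real.sin (Real.sqrt 2 * x) - 4 * Real.cos (Real.sqrt 2 * x); linarith)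
  exact mul_left_cancel₀ hs2pos.ne' this
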